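/- With P, u, v, y_min, y_max, f, g as defined, the function s(y) = sqrt((1/2)(y - y_min)(f(y)+g(y))) on [y_min, y_max] — whose square is the area of the triangle with apex at height y_min and base the slice of P at height y — has the property that every local maximum of s² on [y_min, y_max] is a global maximum. -/

import Mathlib

noncomputable section
open Set Real

/-- Points in the plane. -/
abbrev Pt : Type := ℝ × ℝ

/-- Euclidean dot product on the plane. -/
def dotp (p q : Pt) : ℝ := p.1 * q.1 + p.2 * q.2

private lemma aux_sSup (s : Set ℝ) (hs : s.Nonempty) (r M : ℝ) (hr : 0 ≤ r)
    (h : ∀ z ∈ s, r * z ≤ M) : r * sSup s ≤ M := by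
  rcases hr.eq_or_lt with h0 | h0
  · obtain ⟨z, hz⟩ := hs
    have := h z hz
    rw [← h0] at this ⊢
    simpa using this
  · have hb : sSup s ≤ M / r :=
      csSup_le hs (fun z hz => (le_div_iff₀ h0).2 (by linarith [h z hz]))
    calc r * sSup s ≤ r * (M / r) := mul_le_mul_of_nonneg_left hb h0.le
      _ = M := by field_simp

private lemma aux_sInf (s : Set ℝ) (hs : s.Nonempty) (r M : ℝ) (hr : 0 ≤ r)
    (h : ∀ z ∈ s, M ≤ r * z) : M ≤ r * sInf s := by
  rcases hr.eq_or_lt with h0 | h0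
  · obtain ⟨z, hz⟩ := hs
    have := h z hz
    rw [← h0] at this ⊢
    simpa using this
  · have hb : M / r ≤ sInf s :=
      le_csInf hs (fun z hz => (div_le_iff₀ h0).2 (by linarith [h z hz]))
    calc M = r * (M / r) := by field_simp
      _ ≤ r * sInf s := mul_le_mul_of_nonneg_left hb h0.le

private lemma key_prod_ineq (A1 W1 A2 W2 l : ℝ) (hA1 : 0 ≤ A1) (hW1 : 0 ≤ W1)
    (hA2 : 0 ≤ A2) (hW2 : 0 ≤ W2) (hl0 : 0 < l) (hl1 : l ≤ 1)
    (hPQ : A1 * W1 < A2 * W2) :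
    A1 * W1 < ((1 - l) * A1 + l * A2) * ((1 - l) * W1 + l * W2) := by
  rcases eq_or_lt_of_le (mul_nonneg hA1 hW1) with h0 | h0
  · have hA2' : 0 < A2 := by nlinarith
    have hW2' : 0 < W2 := by nlinarith
    nlinarith [mul_nonneg (mul_nonneg (sub_nonneg.2 hl1) hA1) (mul_nonneg hl0.le hW2'.le),
      mul_nonneg (mul_nonneg hl0.le hA2'.le) (mul_nonneg (sub_nonneg.2 hl1) hW1),
      mul_nonneg (mul_nonneg (sub_nonneg.2 hl1) hA1) (mul_nonneg (sub_nonneg.2 hl1) hW1),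
      mul_pos (mul_pos hl0 hA2') (mul_pos hl0 hW2')]
  · have hs2 : (A1*W2 + A2*W1)^2 ≥ 4*(A1*W1)*(A2*W2) := by
      nlinarith [sq_nonneg (A1*W2 - A2*W1)]
    have hs : 0 ≤ A1*W2 + A2*W1 := by positivity
    have hgt : 2*(A1*W1) < A1*W2 + A2*W1 := by nlinarith [mul_pos h0 (h0.trans hPQ)]
    have h3 : 0 ≤ l*(1-l)*(A1*W2+A2*W1 - 2*(A1*W1)) := by
      have := mul_nonneg hl0.le (sub_nonneg.2 hl1); nlinarith
    have h4 : 0 < l*l*(A2*W2 - A1*W1) := by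
      have := mul_pos hl0 hl0; nlinarith
    nlinarith [h3, h4]

/-- With `P`, `u`, `v`, `y_min`, `y_max`, `f`, `g` as in the slicing
description, every local maximum of `s² = (1/2)(y - y_min)(f(y)+g(y))` on
`[y_min, y_max]` is a global maximum. -/
theorem stmt_5 (S : Finset Pt) (hSne : (S : Set Pt).Nonempty)
    (P : Set Pt) (hP : P = convexHull ℝ (S : Set Pt)) (hint : (interior P).Nonempty)
    (u : Pt) (hu : u.1 ^ 2 + u.2 ^ 2 = 1)
    (v : Pt) (hv : v = (-u.2, u.1))
    (ymin ymax : ℝ)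
    (hymin : ymin = sInf ((fun x => dotp x u) '' P))
    (hymax : ymax = sSup ((fun x => dotp x u) '' P))
    (f g : ℝ → ℝ)
    (hf : ∀ y ∈ Icc ymin ymax, f y = sSup {z : ℝ | y • u + z • v ∈ P})
    (hg : ∀ y ∈ Icc ymin ymax, g y = -sInf {z : ℝ | y • u + z • v ∈ P})
    (s2 : ℝ → ℝ) (hs2 : ∀ y, s2 y = (y - ymin) * (f y + g y) / 2) :
    ∀ y ∈ Icc ymin ymax, IsLocalMaxOn s2 (Icc ymin ymax) y →
      ∀ y' ∈ Icc ymin ymax, s2 y' ≤ s2 y := by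
  -- Basic structure of P
  have hPcvx : Convex ℝ P := hP ▸ convex_convexHull ℝ _
  have hPcomp : IsCompact P := hP ▸ S.finite_toSet.isCompact_convexHull (𝕜 := ℝ)
  have hPne : P.Nonempty := by
    obtain ⟨x, hx⟩ := hSne
    exact ⟨x, hP ▸ subset_convexHull ℝ _ hx⟩
  set T : ℝ → Set ℝ := fun y => {z : ℝ | y • u + z • v ∈ P} with hT
  have hcontu : Continuous fun x : Pt => dotp x u := by
    unfold dotp; fun_prop
  have hcontv : Continuous fun x : Pt => dotp x v := by
    unfold dotp; fun_prop
  have hKcomp : IsCompact ((fun x => dotp x u) '' P) := hPcomp.image hcontu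
  have hKne : ((fun x => dotp x u) '' P).Nonempty := hPne.image _
  have hVcomp : IsCompact ((fun x => dotp x v) '' P) := hPcomp.image hcontv
  -- slices are bounded
  have hTsub : ∀ y : ℝ, T y ⊆ (fun x => dotp x v) '' P := by
    intro y z hz
    refine ⟨y • u + z • v, hz, ?_⟩
    subst hv; simp only [dotp, Prod.fst_add, Prod.snd_add, Prod.smul_fst, Prod.smul_snd,
      smul_eq_mul]
    linear_combination z * hu
  have hTbddA : ∀ y : ℝ, BddAbove (T y) := fun y => hVcomp.bddAbove.mono (hTsub y)
  have hTbddB : ∀ y : ℝ, BddBelow (T y) := fun y => hVcomp.bddBelow.mono (hTsub y)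
  -- slices are nonempty on [ymin, ymax]
  have hordK : ((fun x => dotp x u) '' P).OrdConnected :=
    ((hPcvx.isPreconnected).image _ hcontu.continuousOn).ordConnected
  have hcoord : ∀ x : Pt, (dotp x u) • u + (dotp x v) • v = x := by
    intro x
    subst hv
    refine Prod.ext ?_ ?_
    · simp only [dotp, Prod.fst_add, Prod.smul_fst, smul_eq_mul]
      linear_combination x.1 * hu
    · simp only [dotp, Prod.snd_add, Prod.smul_snd, smul_eq_mul]
      linear_combination x.2 * hu
  have hTne : ∀ y ∈ Icc ymin ymax, (T y).Nonempty := by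
    intro y hy
    have h1 : ymin ∈ (fun x => dotp x u) '' P := by
      rw [hymin]; exact hKcomp.sInf_mem hKne
    have h2 : ymax ∈ (fun x => dotp x u) '' P := by
      rw [hymax]; exact hKcomp.sSup_mem hKne
    obtain ⟨x, hxP, hxy⟩ := hordK.out h1 h2 hy
    refine ⟨dotp x v, ?_⟩
    show y • u + (dotp x v) • v ∈ P
    rw [← hxy]
    simpa [hcoord x] using hxP
  -- width is nonnegative
  have hw0 : ∀ y ∈ Icc ymin ymax, 0 ≤ f y + g y := by
    intro y hy
    obtain ⟨z, hz⟩ := hTne y hy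
    have h1 : z ≤ sSup (T y) := le_csSup (hTbddA y) hz
    have h2 : sInf (T y) ≤ z := csInf_le (hTbddB y) hz
    rw [hf y hy, hg y hy]; linarith
  -- convex combinations of slice points
  have hmix : ∀ a b za zb l : ℝ, za ∈ T a → zb ∈ T b → 0 ≤ l → l ≤ 1 →
      ((1-l)*za + l*zb) ∈ T ((1-l)*a + l*b) := by
    intro a b za zb l hza hzb h0 h1
    have hza' : a • u + za • v ∈ P := hza
    have hzb' : b • u + zb • v ∈ P := hzb
    have hmem := hPcvx hza' hzb' (show (0:ℝ) ≤ 1 - l by linarith) h0 (by ring)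
    show ((1-l)*a + l*b) • u + ((1-l)*za + l*zb) • v ∈ P
    have heq : ((1-l)*a + l*b) • u + ((1-l)*za + l*zb) • v
        = (1-l) • (a•u + za•v) + l • (b•u + zb•v) := by module
    rw [heq]; exact hmem
  -- convex combinations stay in the interval
  have hcomb : ∀ a ∈ Icc ymin ymax, ∀ b ∈ Icc ymin ymax, ∀ l : ℝ, 0 ≤ l → l ≤ 1 →
      (1-l)*a + l*b ∈ Icc ymin ymax := by
    intro a ha b hb l hl0 hl1
    have := (convex_Icc ymin ymax) ha hb (show (0:ℝ) ≤ 1 - l by linarith) hl0 (by ring)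
    simpa [smul_eq_mul] using this
  -- concavity of the width f + g
  have hconc : ∀ a ∈ Icc ymin ymax, ∀ b ∈ Icc ymin ymax, ∀ l : ℝ, 0 ≤ l → l ≤ 1 →
      (1-l)*(f a + g a) + l*(f b + g b) ≤ f ((1-l)*a + l*b) + g ((1-l)*a + l*b) := by
    intro a ha b hb l hl0 hl1
    have hc : (1-l)*a + l*b ∈ Icc ymin ymax := hcomb a ha b hb l hl0 hl1
    have hfc : (1-l)*(f a) + l*(f b) ≤ f ((1-l)*a + l*b) := by
      rw [hf a ha, hf b hb, hf _ hc]
      have step1 : ∀ zb ∈ T b, (1-l)*sSup (T a) + l*zb ≤ sSup (T ((1-l)*a + l*b)) := by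
        intro zb hzb
        have := aux_sSup (T a) (hTne a ha) (1-l) (sSup (T ((1-l)*a + l*b)) - l*zb)
          (by linarith)
          (fun za hza => by
            linarith [le_csSup (hTbddA ((1-l)*a + l*b)) (hmix a b za zb l hza hzb hl0 hl1)])
        linarith
      have := aux_sSup (T b) (hTne b hb) l (sSup (T ((1-l)*a + l*b)) - (1-l)*sSup (T a))
        hl0 (fun zb hzb => by linarith [step1 zb hzb])
      linarith
    have hgc : (1-l)*(g a) + l*(g b) ≤ g ((1-l)*a + l*b) := by
      rw [hg a ha, hg b hb, hg _ hc]
      have step1 : ∀ zb ∈ T b, sInf (T ((1-l)*a + l*b)) - l*zb ≤ (1-l)*sInf (T a) := by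
        intro zb hzb
        have := aux_sInf (T a) (hTne a ha) (1-l) (sInf (T ((1-l)*a + l*b)) - l*zb)
          (by linarith)
          (fun za hza => by
            linarith [csInf_le (hTbddB ((1-l)*a + l*b)) (hmix a b za zb l hza hzb hl0 hl1)])
        linarith
      have := aux_sInf (T b) (hTne b hb) l (sInf (T ((1-l)*a + l*b)) - (1-l)*sInf (T a))
        hl0 (fun zb hzb => by linarith [step1 zb hzb])
      linarith
    linarith
  -- main argument
  intro y hy hloc y' hy'
  by_contra hcon
  push_neg at hcon
  have hyne : y' ≠ y := by
    intro h; rw [h] at hcon; exact lt_irrefl _ hcon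
  -- strict increase along the segment from y to y'
  have hkey : ∀ l : ℝ, 0 < l → l ≤ 1 → s2 y < s2 ((1-l)*y + l*y') := by
    intro l hl0 hl1
    have hcI : (1-l)*y + l*y' ∈ Icc ymin ymax := hcomb y hy y' hy' l hl0.le hl1
    have hwc := hconc y hy y' hy' l hl0.le hl1
    have hA1 : 0 ≤ y - ymin := by linarith [hy.1]
    have hA2 : 0 ≤ y' - ymin := by linarith [hy'.1]
    have hW1 := hw0 y hy
    have hW2 := hw0 y' hy'
    have hPQ : (y - ymin)*(f y + g y) < (y' - ymin)*(f y' + g y') := by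
      have e1 := hs2 y; have e2 := hs2 y'; linarith
    have key := key_prod_ineq (y - ymin) (f y + g y) (y' - ymin) (f y' + g y') l
      hA1 hW1 hA2 hW2 hl0 hl1 hPQ
    have h2 : 0 ≤ (1-l)*y + l*y' - ymin := by nlinarith
    have h3 : ((1-l)*y + l*y' - ymin) * ((1-l)*(f y + g y) + l*(f y' + g y'))
        ≤ ((1-l)*y + l*y' - ymin) * (f ((1-l)*y + l*y') + g ((1-l)*y + l*y')) :=
      mul_le_mul_of_nonneg_left hwc h2
    have h4 : ((1-l)*y + l*y' - ymin) * ((1-l)*(f y + g y) + l*(f y' + g y'))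
        = ((1-l)*(y - ymin) + l*(y' - ymin)) * ((1-l)*(f y + g y) + l*(f y' + g y')) := by
      ring
    rw [hs2 y, hs2 ((1-l)*y + l*y')]
    linarith
  -- contradiction with local maximality
  obtain ⟨ε, hε, hball⟩ := Metric.mem_nhdsWithin_iff.1 hloc
  have hδ0 : (0:ℝ) < |y' - y| := abs_pos.2 (sub_ne_zero.2 hyne)
  set l := min 1 (ε / (2 * |y' - y|)) with hl
  have hl0 : 0 < l := lt_min one_pos (by positivity)
  have hl1 : l ≤ 1 := min_le_left _ _
  have hcI : (1-l)*y + l*y' ∈ Icc ymin ymax := hcomb y hy y' hy' l hl0.le hl1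
  have hcb : (1-l)*y + l*y' ∈ Metric.ball y ε := by
    rw [Metric.mem_ball, Real.dist_eq]
    have h1 : (1-l)*y + l*y' - y = l * (y' - y) := by ring
    rw [h1, abs_mul, abs_of_pos hl0]
    have h2 : l ≤ ε / (2 * |y' - y|) := min_le_right _ _
    have h3 : l * |y' - y| ≤ (ε / (2 * |y' - y|)) * |y' - y| :=
      mul_le_mul_of_nonneg_right h2 (abs_nonneg _)
    have h4 : (ε / (2 * |y' - y|)) * |y' - y| = ε / 2 := by field_simp
    linarith
  have := hball ⟨hcb, hcI⟩
  exact absurd this (not_le.2 (hkey l hl0 hl1))
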